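/- Let δ = xᵀB∂ (where B ∈ ℂ^{n×n}) be a degree-zero derivation on ℂ[x₁,…,xₙ] with δ(f) = 0 for f = ∏ L_k a product of linear forms spanning the dual space. Then each L_k is an eigenvector of the action of B on the space of linear forms (δ(L_k) = γ_k L_k for some γ_k ∈ ℂ), and B is diagonalizable. -/

import Mathlib

open scoped BigOperators

/-- The linear form with coefficient vector `v`. -/
noncomputable def linearForm {n : ℕ} (v : Fin n → ℂ) : MvPolynomial (Fin n) ℂ :=
  ∑ j, MvPolynomial.C (v j) * MvPolynomial.X j

/-- The defining polynomial `∏ᵢ Lᵢ` of a central hyperplane arrangement. -/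
noncomputable def arrPoly {n d : ℕ} (c : Fin d → Fin n → ℂ) : MvPolynomial (Fin n) ℂ :=
  ∏ i, linearForm (c i)

namespace Stmt7Aux

open MvPolynomial

lemma pderiv_linearForm {n : ℕ} (v : Fin n → ℂ) (j : Fin n) :
    pderiv j (linearForm v) = C (v j) := by
  simp [linearForm, pderiv_X, Pi.single_apply, Finset.mul_sum, mul_ite]

lemma eval_linearForm {n : ℕ} (v : Fin n → ℂ) (x : Fin n → ℂ) :
    eval x (linearForm v) = ∑ j, v j * x j := by
  simp [linearForm]

lemma coeff_linearForm {n : ℕ} (v : Fin n → ℂ) (j : Fin n) :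
    coeff (Finsupp.single j 1) (linearForm v) = v j := by
  simp [linearForm, coeff_sum, coeff_C_mul, coeff_X', Finsupp.single_left_inj]

lemma linearForm_eq_zero {n : ℕ} {v : Fin n → ℂ} (h : linearForm v = 0) : v = 0 := by
  funext j
  have := coeff_linearForm v j
  rw [h] at this
  simpa using this.symm

lemma linearForm_smul {n : ℕ} (t : ℂ) (v : Fin n → ℂ) :
    linearForm (t • v) = C t * linearForm v := by
  simp [linearForm, Finset.mul_sum, mul_assoc]

lemma deriv_sum_apply {ι : Type*} {R A M : Type*} [CommSemiring R] [CommSemiring A] [Algebra R A]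
    [AddCommMonoid M] [Module A M] [Module R M] (s : Finset ι)
    (D : ι → Derivation R A M) (a : A) : (∑ i ∈ s, D i) a = ∑ i ∈ s, D i a := by
  induction s using Finset.cons_induction with
  | empty => simp
  | cons i s hi ih => rw [Finset.sum_cons, Derivation.add_apply, ih, Finset.sum_cons]

/-- The derivation `xᵀB∂`. -/
noncomputable def delta {n : ℕ} (B : Matrix (Fin n) (Fin n) ℂ) :
    Derivation ℂ (MvPolynomial (Fin n) ℂ) (MvPolynomial (Fin n) ℂ) :=
  ∑ i, ∑ j, (X i * C (B i j)) • (pderiv j)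

lemma delta_apply {n : ℕ} (B : Matrix (Fin n) (Fin n) ℂ) (p : MvPolynomial (Fin n) ℂ) :
    delta B p = ∑ i, ∑ j, X i * (C (B i j) * pderiv j p) := by
  simp only [delta, deriv_sum_apply, Derivation.smul_apply, smul_eq_mul, mul_assoc]

lemma delta_C {n : ℕ} (B : Matrix (Fin n) (Fin n) ℂ) (a : ℂ) : delta B (C a) = 0 := by
  rw [delta_apply]
  simp

lemma delta_linearForm {n : ℕ} (B : Matrix (Fin n) (Fin n) ℂ) (v : Fin n → ℂ) :
    delta B (linearForm v) = linearForm (B.mulVec v) := by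
  rw [delta_apply]
  simp only [pderiv_linearForm]
  unfold linearForm
  refine Finset.sum_congr rfl fun i _ => ?_
  rw [Matrix.mulVec, dotProduct, map_sum, Finset.sum_mul]
  refine Finset.sum_congr rfl fun j _ => ?_
  rw [map_mul]
  ring

lemma key {n : ℕ} {ι : Type*} (v w : Fin n → ℂ) (hv : v ≠ 0) (s : Finset ι) (u : ι → Fin n → ℂ)
    (hu : ∀ m ∈ s, ¬ ∃ t : ℂ, u m = t • v)
    (H : ∀ x : Fin n → ℂ, (∑ j, v j * x j) = 0 →
      (∑ j, w j * x j) * ∏ m ∈ s, (∑ j, u m j * x j) = 0) :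
    ∃ γ : ℂ, w = γ • v := by
  obtain ⟨j0, hj0⟩ : ∃ j0, v j0 ≠ 0 := by
    by_contra h
    push_neg at h
    exact hv (funext h)
  set prj : (Fin n → ℂ) → (Fin n → ℂ) := fun a => a - (a j0 / v j0) • v with hprj
  set P : (Fin n → ℂ) → (Fin n → ℂ) :=
    fun y j => y j - (∑ i, v i * y i) / v j0 * (if j = j0 then 1 else 0) with hP
  have hφ : ∀ (a y : Fin n → ℂ), (∑ j, a j * P y j) = ∑ j, prj a j * y j := by
    intro a y
    simp only [hP, hprj, Pi.sub_apply, Pi.smul_apply, smul_eq_mul]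
    simp only [mul_sub, sub_mul, mul_ite, mul_one, mul_zero, Finset.sum_sub_distrib,
      Finset.sum_ite_eq', Finset.mem_univ, if_true]
    have h1 : ∑ x, a j0 / v j0 * v x * y x = a j0 / v j0 * ∑ x, v x * y x := by
      rw [Finset.mul_sum]
      exact Finset.sum_congr rfl fun x _ => (mul_assoc _ _ _)
    rw [h1]
    ring
  have hvP : ∀ y, (∑ j, v j * P y j) = 0 := by
    intro y
    rw [hφ]
    simp only [hprj, Pi.sub_apply, Pi.smul_apply, smul_eq_mul]
    rw [div_self hj0]
    simp
  have hzero : linearForm (prj w) * ∏ m ∈ s, linearForm (prj (u m)) = 0 := by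
    apply MvPolynomial.funext
    intro y
    rw [map_zero, map_mul, map_prod, eval_linearForm]
    rw [← hφ w y]
    rw [Finset.prod_congr rfl (fun m _ => by rw [eval_linearForm, ← hφ (u m) y])]
    exact H (P y) (hvP y)
  have hsub : ∀ a : Fin n → ℂ, prj a = 0 → ∃ γ : ℂ, a = γ • v := by
    intro a ha
    exact ⟨a j0 / v j0, by rwa [hprj, sub_eq_zero] at ha⟩
  rcases mul_eq_zero.mp hzero with h | h
  · exact hsub w (linearForm_eq_zero h)
  · exfalso
    obtain ⟨m, hm, hm0⟩ := Finset.prod_eq_zero_iff.mp h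
    exact hu m hm (hsub (u m) (linearForm_eq_zero hm0))

lemma eigen {n d : ℕ} (c : Fin d → Fin n → ℂ) (hc : ∀ k, c k ≠ 0)
    (B : Matrix (Fin n) (Fin n) ℂ) (hD : delta B (arrPoly c) = 0) (k : Fin d) :
    ∃ γ : ℂ, B.mulVec (c k) = γ • c k := by
  classical
  set L := linearForm (c k) with hL
  set S : Finset (Fin d) := Finset.univ.filter (fun m => ∃ t : ℂ, c m = t • c k) with hS
  have hkS : k ∈ S := Finset.mem_filter.mpr ⟨Finset.mem_univ k, 1, (one_smul _ _).symm⟩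
  set t : Fin d → ℂ := fun m => if h : ∃ t : ℂ, c m = t • c k then h.choose else 1 with ht
  have hts : ∀ m ∈ S, c m = t m • c k := by
    intro m hm
    have h := (Finset.mem_filter.mp hm).2
    simp only [ht, dif_pos h]
    exact h.choose_spec
  have htne : ∀ m ∈ S, t m ≠ 0 := by
    intro m hm h0
    exact hc m (by rw [hts m hm, h0, zero_smul])
  set u := ∏ m ∈ S, t m with hu'
  have hu : u ≠ 0 := Finset.prod_ne_zero_iff.mpr htne
  set h := ∏ m ∈ Finset.univ.filter (fun m => ¬∃ t : ℂ, c m = t • c k), linearForm (c m) with hh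
  obtain ⟨e, he⟩ : ∃ e, S.card = e + 1 :=
    ⟨S.card - 1, (Nat.succ_pred_eq_of_pos (Finset.card_pos.mpr ⟨k, hkS⟩)).symm⟩
  have hf : arrPoly c = C u * L ^ (e + 1) * h := by
    rw [arrPoly, ← Finset.prod_filter_mul_prod_filter_not Finset.univ
      (fun m => ∃ t : ℂ, c m = t • c k), ← hS, ← hh]
    congr 1
    rw [Finset.prod_congr rfl (fun m hm => by rw [hts m hm, linearForm_smul]),
      Finset.prod_mul_distrib, ← map_prod, ← hu', Finset.prod_const, ← hL, he]
  have hLne : L ≠ 0 := fun h0 => hc k (linearForm_eq_zero h0)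
  -- expand the derivation
  have hexp : delta B (arrPoly c) =
      C u * L ^ e * (L * delta B h + h * ((e + 1) • delta B L)) := by
    rw [hf, Derivation.leibniz, Derivation.leibniz, Derivation.leibniz_pow, delta_C]
    simp only [smul_eq_mul, mul_zero, add_zero, Nat.add_sub_cancel]
    ring_nf
  have hq : L * delta B h + h * ((e + 1) • delta B L) = 0 := by
    have := hexp.symm.trans hD
    rcases mul_eq_zero.mp this with h0 | h0
    · rcases mul_eq_zero.mp h0 with h1 | h1
      · exact absurd h1 (fun h1 => hu (by simpa using (MvPolynomial.C_eq_zero).mp h1))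
      · exact absurd h1 (pow_ne_zero _ hLne)
    · exact h0
  -- pointwise consequence
  have hpt : ∀ x : Fin n → ℂ, (∑ j, c k j * x j) = 0 →
      (∑ j, B.mulVec (c k) j * x j) *
        ∏ m ∈ Finset.univ.filter (fun m => ¬∃ t : ℂ, c m = t • c k),
          (∑ j, c m j * x j) = 0 := by
    intro x hx
    have := congrArg (eval x) hq
    rw [map_zero, map_add, map_mul, map_mul, map_nsmul] at this
    rw [hL, eval_linearForm] at this
    rw [hx, zero_mul, zero_add] at this
    have h2 : eval x h * ((e + 1 : ℕ) • eval x (delta B L)) = 0 := this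
    rw [nsmul_eq_mul] at h2
    have h3 : eval x (delta B L) * eval x h = 0 := by
      have hcast : ((e + 1 : ℕ) : ℂ) ≠ 0 := by exact_mod_cast Nat.succ_ne_zero e
      have := mul_eq_zero.mp h2
      rcases this with h4 | h4
      · rw [h4, mul_zero]
      · rcases mul_eq_zero.mp h4 with h5 | h5
        · exact absurd h5 hcast
        · rw [h5, zero_mul]
    rw [hL, delta_linearForm, eval_linearForm] at h3
    rw [hh, map_prod] at h3
    rw [Finset.prod_congr rfl (fun m _ => eval_linearForm (c m) x)] at h3
    exact h3
  exact key (c k) (B.mulVec (c k)) (hc k) _ c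
    (fun m hm => (Finset.mem_filter.mp hm).2) hpt

end Stmt7Aux

open Stmt7Aux

/-- Let `δ = xᵀB∂ = Σᵢⱼ xᵢ bᵢⱼ ∂ⱼ` be a degree-zero derivation with
`δ f = 0`, where `f = ∏ L_k` is a product of linear forms spanning the dual space.
Then each `L_k` is an eigenvector of the induced action of `B` on linear forms, and
`B` is diagonalizable. -/
theorem stmt_7 {n d : ℕ} (c : Fin d → Fin n → ℂ) (hc : ∀ k, c k ≠ 0)
    (hess : Submodule.span ℂ (Set.range c) = ⊤)
    (B : Matrix (Fin n) (Fin n) ℂ)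
    (hδ : ∑ i, ∑ j, MvPolynomial.X i *
        (MvPolynomial.C (B i j) * MvPolynomial.pderiv j (arrPoly c)) = 0) :
    (∀ k, ∃ γ : ℂ, B.mulVec (c k) = γ • c k) ∧
      ∃ (P : Matrix (Fin n) (Fin n) ℂ) (D : Fin n → ℂ),
        IsUnit P.det ∧ B = P * Matrix.diagonal D * P⁻¹ := by
  classical
  have hD : delta B (arrPoly c) = 0 := (delta_apply B (arrPoly c)).trans hδ
  have heig : ∀ k, ∃ γ : ℂ, B.mulVec (c k) = γ • c k := eigen c hc B hD
  refine ⟨heig, ?_⟩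
  -- extract a basis of eigenvectors
  obtain ⟨b, hbsub, hbspan, hbli⟩ := exists_linearIndependent ℂ (Set.range c)
  have hbtop : Submodule.span ℂ b = ⊤ := hbspan.trans hess
  let bas : Module.Basis ↥b ℂ (Fin n → ℂ) :=
    Module.Basis.mk hbli (by rw [Subtype.range_coe]; exact le_of_eq hbtop.symm)
  have : Finite ↥b := hbli.finite
  have : Fintype ↥b := Fintype.ofFinite _
  have hcard : Fintype.card ↥b = n := by
    rw [← Module.finrank_eq_card_basis bas, Module.finrank_fin_fun]
  let eqv : ↥b ≃ Fin n := Fintype.equivFinOfCardEq hcard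
  let bb : Module.Basis (Fin n) ℂ (Fin n → ℂ) := bas.reindex eqv
  have hbbmem : ∀ j, bb j ∈ Set.range c := by
    intro j
    have : bb j = ↑(eqv.symm j) := by
      simp [bb, bas, Module.Basis.reindex_apply, Module.Basis.mk_apply]
    rw [this]
    exact hbsub (eqv.symm j).2
  have hbbeig : ∀ j, ∃ γ : ℂ, B.mulVec (bb j) = γ • bb j := by
    intro j
    obtain ⟨k, hk⟩ := hbbmem j
    obtain ⟨γ, hγ⟩ := heig k
    exact ⟨γ, by rw [← hk]; exact hγ⟩
  choose γ hγ using hbbeig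
  set P : Matrix (Fin n) (Fin n) ℂ := (Pi.basisFun ℂ (Fin n)).toMatrix bb with hPdef
  have hPapply : ∀ i j, P i j = bb j i := by
    intro i j
    simp [hPdef, Module.Basis.toMatrix_apply]
  have hinv : Invertible P := (Pi.basisFun ℂ (Fin n)).invertibleToMatrix bb
  have hPdet : IsUnit P.det := (Matrix.isUnit_iff_isUnit_det P).mp (isUnit_of_invertible P)
  have hBP : B * P = P * Matrix.diagonal γ := by
    ext i j
    rw [Matrix.mul_apply, Matrix.mul_diagonal]
    have : ∑ l, B i l * P l j = B.mulVec (bb j) i := by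
      rw [Matrix.mulVec, dotProduct]
      exact Finset.sum_congr rfl fun l _ => by rw [hPapply]
    rw [this, hγ j, Pi.smul_apply, smul_eq_mul, hPapply]
    ring
  refine ⟨P, γ, hPdet, ?_⟩
  rw [← hBP, Matrix.mul_assoc, Matrix.mul_nonsing_inv P hPdet, Matrix.mul_one]
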